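/- Let X be a finite set with |X| = n and a ∈ T_X an idempotent with rank(a) = r, where 1 < r < n. Then the rank of the semigroup Reg(T_X^a) of regular elements of the variant T_X^a (under the operation ⋆) is r^{n−r} + 1. -/

import Mathlib

/-- Left-to-right composition of transformations: `x (f * g) = (x f) g`. -/
def tmul {X : Type*} (f g : X → X) : X → X := fun x => g (f x)

/-- The variant product: `f ⋆ g = f · a · g` (left-to-right). -/
def vmul {X : Type*} (a f g : X → X) : X → X := fun x => g (a (f x))

/-- The rank of a transformation: the size of its image. -/
def rnk {X : Type*} [Fintype X] [DecidableEq X] (f : X → X) : ℕ :=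
  (Finset.univ.image f).card

/-- The subsemigroup generated by `M` with respect to the binary operation `op`:
the least subset containing `M` and closed under `op`. -/
def genBy {T : Type*} (op : T → T → T) (M : Set T) : Set T :=
  ⋂₀ {N : Set T | M ⊆ N ∧ ∀ x ∈ N, ∀ y ∈ N, op x y ∈ N}


open Finset

namespace SRank

theorem subset_genBy {T : Type*} (op : T → T → T) (M : Set T) : M ⊆ genBy op M :=
  fun x hx => Set.mem_sInter.2 fun _ hN => hN.1 hx

theorem genBy_closed {T : Type*} {op : T → T → T} {M : Set T} {x y : T}
    (hx : x ∈ genBy op M) (hy : y ∈ genBy op M) : op x y ∈ genBy op M :=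
  Set.mem_sInter.2 fun N hN =>
    hN.2 x (Set.mem_sInter.1 hx N hN) y (Set.mem_sInter.1 hy N hN)

theorem genBy_le {T : Type*} {op : T → T → T} {M N : Set T} (h1 : M ⊆ N)
    (h2 : ∀ x ∈ N, ∀ y ∈ N, op x y ∈ N) : genBy op M ⊆ N :=
  fun x hx => Set.mem_sInter.1 hx N ⟨h1, h2⟩

variable {X : Type*} [Fintype X] [DecidableEq X]

theorem image_tmul (f g : X → X) :
    Finset.univ.image (tmul f g) = (Finset.univ.image f).image g := by
  rw [Finset.image_image]; rfl

theorem rnk_eq (f : X → X) : rnk f = (Finset.univ.image f).card := rfl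

/-- the image finset of `a`, i.e. the set `A`. -/
def AF (a : X → X) : Finset X := Finset.univ.image a

theorem mem_AF {a : X → X} (ha : ∀ x, a (a x) = a x) {y : X} :
    y ∈ AF a ↔ a y = y := by
  constructor
  · intro h
    obtain ⟨x, -, rfl⟩ := Finset.mem_image.1 h
    exact ha x
  · intro h
    exact Finset.mem_image.2 ⟨y, Finset.mem_univ y, h⟩

theorem card_AF (a : X → X) : (AF a).card = rnk a := rfl

/-- the set of regular elements -/
def Pset (a : X → X) : Set (X → X) := {f : X → X | rnk (tmul (tmul a f) a) = rnk f}

theorem pset_image (a f : X → X) :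
    Finset.univ.image (tmul (tmul a f) a) = (((AF a).image f).image a) := by
  rw [image_tmul, image_tmul]; rfl

theorem mem_Pset_iff {a f : X → X} :
    f ∈ Pset a ↔ ((((AF a).image f).image a)).card = rnk f := by
  unfold Pset; rw [Set.mem_setOf_eq, rnk_eq, pset_image]



-- key structural facts about a regular element
theorem P_cardA {a f : X → X} (hf : f ∈ Pset a) : ((AF a).image f).card = rnk f := by
  have h1 := mem_Pset_iff.1 hf
  have h2 : (((AF a).image f).image a).card ≤ ((AF a).image f).card := card_image_le
  have h3 : ((AF a).image f).card ≤ rnk f := by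
    rw [rnk_eq]
    exact card_le_card (Finset.image_subset_image (Finset.subset_univ _))
  omega

theorem P_imageA {a f : X → X} (hf : f ∈ Pset a) :
    (AF a).image f = Finset.univ.image f := by
  apply Finset.eq_of_subset_of_card_le (Finset.image_subset_image (Finset.subset_univ _))
  rw [P_cardA hf]; rfl

theorem P_injOn {a f : X → X} (hf : f ∈ Pset a) :
    ∀ v ∈ Finset.univ.image f, ∀ w ∈ Finset.univ.image f, a v = a w → v = w := by
  have h1 := mem_Pset_iff.1 hf
  have : ((Finset.univ.image f).image a).card = (Finset.univ.image f).card := by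
    rw [← P_imageA hf, h1, ← P_cardA hf]
  have hinj := Finset.injOn_of_card_image_eq this
  intro v hv w hw hvw
  exact hinj (by exact_mod_cast hv) (by exact_mod_cast hw) hvw

theorem P_card_image_a {a f : X → X} (hf : f ∈ Pset a) :
    ((Finset.univ.image f).image a).card = rnk f := by
  rw [← P_imageA hf, mem_Pset_iff.1 hf]

theorem P_rnk_le {a f : X → X} (hf : f ∈ Pset a) : rnk f ≤ rnk a := by
  rw [← mem_Pset_iff.1 hf, rnk_eq a]
  exact card_le_card (fun v hv => by
    obtain ⟨w, -, rfl⟩ := Finset.mem_image.1 hv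
    exact Finset.mem_image.2 ⟨w, Finset.mem_univ _, rfl⟩)

-- P is closed under vmul
theorem P_closed {a f g : X → X} (hf : f ∈ Pset a) (hg : g ∈ Pset a) :
    vmul a f g ∈ Pset a := by
  have h1 : (AF a).image (vmul a f g) = (((AF a).image f).image a).image g := by
    rw [Finset.image_image, Finset.image_image]; rfl
  have h2 : Finset.univ.image (vmul a f g) = ((Finset.univ.image f).image a).image g := by
    rw [Finset.image_image, Finset.image_image]; rfl
  rw [mem_Pset_iff, h1, rnk_eq, h2, P_imageA hf]
  set B := ((Finset.univ.image f).image a).image g with hB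
  have hBsub : B ⊆ Finset.univ.image g := by
    intro v hv
    obtain ⟨w, -, rfl⟩ := Finset.mem_image.1 hv
    exact Finset.mem_image.2 ⟨w, Finset.mem_univ _, rfl⟩
  apply Finset.card_image_of_injOn
  intro v hv w hw hvw
  exact P_injOn hg v (hBsub (by exact_mod_cast hv)) w (hBsub (by exact_mod_cast hw)) hvw

-- kernel factorization lemma
theorem ker_factor {x z : X → X} (hk : ∀ t t', x t = x t' → z t = z t') :
    Finset.univ.image z = (Finset.univ.image x).image
      (fun v => if h : ∃ t, x t = v then z h.choose else v) := by
  classical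
  ext v
  simp only [Finset.mem_image, Finset.mem_univ, true_and]
  constructor
  · rintro ⟨t, rfl⟩
    refine ⟨x t, ⟨t, rfl⟩, ?_⟩
    rw [dif_pos ⟨t, rfl⟩]
    exact hk _ _ (⟨t, rfl⟩ : ∃ s, x s = x t).choose_spec
  · rintro ⟨w, ⟨t, rfl⟩, rfl⟩
    rw [dif_pos ⟨t, rfl⟩]
    exact ⟨_, rfl⟩

theorem ker_eq_of_rnk_eq {x z : X → X} (hk : ∀ t t', x t = x t' → z t = z t')
    (hr : rnk z = rnk x) : ∀ t t', z t = z t' → x t = x t' := by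
  classical
  set F := (fun v => if h : ∃ t, x t = v then z h.choose else v) with hF
  have him := ker_factor hk
  have hFx : ∀ t, F (x t) = z t := by
    intro t
    rw [hF]; dsimp only
    rw [dif_pos ⟨t, rfl⟩]
    exact hk _ _ (⟨t, rfl⟩ : ∃ s, x s = x t).choose_spec
  have hcard : ((Finset.univ.image x).image F).card = (Finset.univ.image x).card := by
    rw [hF, ← him]
    exact hr
  have hinj := Finset.injOn_of_card_image_eq hcard
  intro t t' hz
  have : F (x t) = F (x t') := by rw [hFx, hFx, hz]
  exact hinj (by exact_mod_cast Finset.mem_image.2 ⟨t, Finset.mem_univ _, rfl⟩)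
    (by exact_mod_cast Finset.mem_image.2 ⟨t', Finset.mem_univ _, rfl⟩) this

theorem rnk_le_of_ker {x z : X → X} (hk : ∀ t t', x t = x t' → z t = z t') :
    rnk z ≤ rnk x := by
  classical
  rw [rnk_eq, rnk_eq, ker_factor hk]
  exact card_image_le




-- ## retractions and sections
variable (a : X → X)

def RetP (τ : X → X) : Prop := (∀ x, a (τ x) = τ x) ∧ (∀ x, τ (a x) = a x)
def SecP (d : X → X) : Prop := (∀ x, a (d x) = a x) ∧ (∀ x, d (a x) = d x)

instance : DecidablePred (RetP a) := fun τ => by unfold RetP; infer_instance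
instance : DecidablePred (SecP a) := fun d => by unfold SecP; infer_instance

def Fx := {y : X // a y = y}
def Rt := {τ : X → X // RetP a τ}
def Sc := {d : X → X // SecP a d}

instance : Fintype (Fx a) := by unfold Fx; infer_instance
instance : DecidableEq (Fx a) := by unfold Fx; infer_instance
instance : Fintype (Rt a) := by unfold Rt; infer_instance
instance : Fintype (Sc a) := by unfold Sc; infer_instance
instance : DecidableEq (Rt a) := by unfold Rt; infer_instance
instance : DecidableEq (Sc a) := by unfold Sc; infer_instance

variable {a}

theorem card_Fx (ha : ∀ x, a (a x) = a x) : Fintype.card (Fx a) = rnk a := by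
  have h1 : AF a = Finset.univ.filter (fun y => a y = y) := by
    ext y
    simp only [Finset.mem_filter, Finset.mem_univ, true_and]
    exact mem_AF ha
  rw [← card_AF, h1]
  unfold Fx
  convert Fintype.card_subtype (fun y => a y = y)

theorem card_Rt (ha : ∀ x, a (a x) = a x) :
    Fintype.card (Rt a) = rnk a ^ (Fintype.card X - rnk a) := by
  have E : Rt a ≃ ({x : X // ¬ a x = x} → Fx a) := by
    refine ⟨fun τ => fun x => ⟨τ.1 x.1, τ.2.1 x.1⟩,
      fun F => ⟨fun x => if h : a x = x then x else (F ⟨x, h⟩).1, ?_, ?_⟩, ?_, ?_⟩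
    · intro x
      by_cases h : a x = x
      · simp only [dif_pos h]; exact h
      · simp only [dif_neg h]; exact (F ⟨x, h⟩).2
    · intro x
      simp only [dif_pos (ha x)]
    · intro τ
      apply Subtype.ext
      funext x
      by_cases h : a x = x
      · simp only [dif_pos h]
        have := τ.2.2 x
        rw [h] at this
        exact this.symm
      · simp only [dif_neg h]
    · intro F
      funext x
      apply Subtype.ext
      simp only [dif_neg x.2]
  rw [Fintype.card_congr E, Fintype.card_fun, Fintype.card_subtype_compl, card_Fx ha]
  have hc : Fintype.card {x : X // a x = x} = rnk a := card_Fx ha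
  rw [hc]

theorem card_Sc_le (ha : ∀ x, a (a x) = a x) (h2 : 2 ≤ rnk a) :
    Fintype.card (Sc a) ≤ Fintype.card (Rt a) := by
  have E : Sc a ≃ (∀ y : Fx a, {x : X // a x = y.1}) := by
    refine ⟨fun d => fun y => ⟨d.1 y.1, by rw [d.2.1 y.1, y.2]⟩,
      fun F => ⟨fun x => (F ⟨a x, ha x⟩).1, ?_, ?_⟩, ?_, ?_⟩
    · intro x
      rw [(F ⟨a x, ha x⟩).2]
    · intro x
      show (F ⟨a (a x), ha (a x)⟩).1 = (F ⟨a x, ha x⟩).1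
      have : (⟨a (a x), ha (a x)⟩ : Fx a) = ⟨a x, ha x⟩ := Subtype.ext (ha x)
      rw [this]
    · intro d
      apply Subtype.ext
      funext x
      simp only
      rw [d.2.2 x]
    · intro F
      funext y
      apply Subtype.ext
      show (F ⟨a y.1, ha y.1⟩).1 = (F y).1
      have : (⟨a y.1, ha y.1⟩ : Fx a) = y := Subtype.ext y.2
      rw [this]
  have hsum : ∑ y : Fx a, Fintype.card {x : X // a x = y.1} = Fintype.card X := by
    rw [← Fintype.card_sigma]
    apply Fintype.card_congr
    exact (Equiv.sigmaCongrRight (fun y => (Equiv.subtypeEquivRight (fun x =>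
      ⟨fun h => Subtype.ext h, fun h => congrArg Subtype.val h⟩)))).trans
      (Equiv.sigmaFiberEquiv (fun x => (⟨a x, ha x⟩ : Fx a)))
  have hpos : ∀ y : Fx a, 1 ≤ Fintype.card {x : X // a x = y.1} := by
    intro y
    have : Nonempty {x : X // a x = y.1} := ⟨⟨y.1, y.2⟩⟩
    exact Fintype.card_pos_iff.2 this
  have hle : ∀ y : Fx a, Fintype.card {x : X // a x = y.1} ≤
      rnk a ^ (Fintype.card {x : X // a x = y.1} - 1) := by
    intro y
    set m := Fintype.card {x : X // a x = y.1}
    have hm := hpos y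
    calc m = (m - 1) + 1 := by omega
    _ ≤ 2 ^ (m - 1) := Nat.succ_le_of_lt (Nat.lt_two_pow_self (n := m - 1))
    _ ≤ rnk a ^ (m - 1) := Nat.pow_le_pow_left h2 _
  calc Fintype.card (Sc a) = ∏ y : Fx a, Fintype.card {x : X // a x = y.1} := by
        rw [Fintype.card_congr E, Fintype.card_pi]
    _ ≤ ∏ y : Fx a, rnk a ^ (Fintype.card {x : X // a x = y.1} - 1) :=
        Finset.prod_le_prod (fun _ _ => Nat.zero_le _) (fun y _ => hle y)
    _ = rnk a ^ (∑ y : Fx a, (Fintype.card {x : X // a x = y.1} - 1)) :=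
        Finset.prod_pow_eq_pow_sum _ _ _
    _ = rnk a ^ (Fintype.card X - rnk a) := by
        congr 1
        have h1 : (∑ y : Fx a, (Fintype.card {x : X // a x = y.1} - 1)) +
            Fintype.card (Fx a) = Fintype.card X := by
          rw [← hsum, ← Finset.card_univ, Finset.card_eq_sum_ones, ← Finset.sum_add_distrib]
          exact Finset.sum_congr rfl (fun y _ => by have := hpos y; omega)
        have h2 := card_Fx ha
        omega
    _ = Fintype.card (Rt a) := (card_Rt ha).symm


-- ## the generating set construction
variable (a) in
def barp (ha : ∀ x, a (a x) = a x) (π : Equiv.Perm (Fx a)) : X → X :=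
  fun x => (π ⟨a x, ha x⟩).1

noncomputable def Gp (jemb : Fx a ↪ Rt a) (α₀ : Fx a) (k : Rt a) : Equiv.Perm (Fx a) :=
  if h : ∃ β, jemb β = k then Equiv.swap α₀ h.choose else 1

noncomputable def Dk (ha : ∀ x, a (a x) = a x) (ι : Sc a ↪ Rt a) (k : Rt a) : Sc a :=
  if h : ∃ d, ι d = k then h.choose else ⟨a, ha, ha⟩

variable (a) in
noncomputable def elt (ha : ∀ x, a (a x) = a x) (ι : Sc a ↪ Rt a) (k k' : Rt a)
    (π : Equiv.Perm (Fx a)) : X → X :=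
  fun x => (Dk ha ι k').1 (barp a ha π (k.1 x))

variable (a) in
noncomputable def uG (ha : ∀ x, a (a x) = a x) (ι : Sc a ↪ Rt a) (jemb : Fx a ↪ Rt a)
    (α₀ : Fx a) (k : Rt a) : X → X :=
  elt a ha ι k k (Gp jemb α₀ k)

variable (a) in
def wmap (a₁ a₂ : X) : X → X := fun x => if a x = a₁ then a₂ else a x

theorem Dk_ι {ha : ∀ x, a (a x) = a x} {ι : Sc a ↪ Rt a} (d : Sc a) :
    Dk ha ι (ι d) = d := by
  unfold Dk
  refine (dif_pos ⟨d, rfl⟩).trans ?_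
  exact ι.injective (⟨d, rfl⟩ : ∃ e, ι e = ι d).choose_spec

theorem Gp_j {jemb : Fx a ↪ Rt a} {α₀ : Fx a} (β : Fx a) :
    Gp jemb α₀ (jemb β) = Equiv.swap α₀ β := by
  unfold Gp
  rw [dif_pos ⟨β, rfl⟩]
  rw [jemb.injective (⟨β, rfl⟩ : ∃ e, jemb e = jemb β).choose_spec]

theorem image_univ_ret (ha : ∀ x, a (a x) = a x) (k : Rt a) :
    Finset.univ.image k.1 = AF a := by
  ext v
  rw [mem_AF ha]
  constructor
  · rintro hv
    obtain ⟨x, -, rfl⟩ := Finset.mem_image.1 hv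
    exact k.2.1 x
  · intro hv
    refine Finset.mem_image.2 ⟨v, Finset.mem_univ _, ?_⟩
    have := k.2.2 v
    rw [hv] at this
    exact this

theorem image_AF_barp (ha : ∀ x, a (a x) = a x) (π : Equiv.Perm (Fx a)) :
    (AF a).image (barp a ha π) = AF a := by
  ext v
  rw [mem_AF ha]
  constructor
  · intro hv
    obtain ⟨x, -, rfl⟩ := Finset.mem_image.1 hv
    exact (π ⟨a x, ha x⟩).2
  · intro hv
    refine Finset.mem_image.2 ⟨(π.symm ⟨v, hv⟩).1, ?_, ?_⟩
    · exact (mem_AF ha).2 (π.symm ⟨v, hv⟩).2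
    · show (π ⟨a (π.symm ⟨v, hv⟩).1, _⟩).1 = v
      have h1 : (⟨a (π.symm ⟨v, hv⟩).1, ha _⟩ : Fx a) = π.symm ⟨v, hv⟩ :=
        Subtype.ext (π.symm ⟨v, hv⟩).2
      rw [h1]
      exact congrArg Subtype.val (π.apply_symm_apply _)

theorem sec_image_a (ha : ∀ x, a (a x) = a x) (d : Sc a) :
    ((AF a).image d.1).image a = AF a := by
  rw [Finset.image_image]
  have h1 : (AF a).image (a ∘ d.1) = (AF a).image (fun y => a y) :=
    Finset.image_congr (fun y _ => d.2.1 y)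
  rw [h1]
  have h2 : (AF a).image (fun y => a y) = (AF a).image id :=
    Finset.image_congr (fun y hy => (mem_AF ha).1 hy)
  rw [h2, Finset.image_id]

theorem card_AF_image_sec (ha : ∀ x, a (a x) = a x) (d : Sc a) :
    ((AF a).image d.1).card = (AF a).card := by
  have h1 : ((AF a).image d.1).card ≤ (AF a).card := card_image_le
  have h2 : (AF a).card ≤ ((AF a).image d.1).card := by
    conv_lhs => rw [← sec_image_a ha d]
    exact card_image_le
  omega

theorem elt_rnk (ha : ∀ x, a (a x) = a x) (ι : Sc a ↪ Rt a) (k k' : Rt a)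
    (π : Equiv.Perm (Fx a)) : rnk (elt a ha ι k k' π) = rnk a := by
  have h1 : Finset.univ.image (elt a ha ι k k' π) =
      (((Finset.univ.image k.1).image (barp a ha π)).image (Dk ha ι k').1) := by
    rw [Finset.image_image, Finset.image_image]; rfl
  rw [rnk_eq, h1, image_univ_ret ha, image_AF_barp ha, card_AF_image_sec ha, card_AF]

theorem elt_memP (ha : ∀ x, a (a x) = a x) (ι : Sc a ↪ Rt a) (k k' : Rt a)
    (π : Equiv.Perm (Fx a)) : elt a ha ι k k' π ∈ Pset a := by
  rw [mem_Pset_iff, elt_rnk]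
  have h1 : (AF a).image (elt a ha ι k k' π) =
      (((AF a).image k.1).image (barp a ha π)).image (Dk ha ι k').1 := by
    rw [Finset.image_image, Finset.image_image]; rfl
  have h2 : (AF a).image k.1 = AF a := by
    apply Finset.Subset.antisymm
    · intro v hv
      obtain ⟨x, -, rfl⟩ := Finset.mem_image.1 hv
      exact (mem_AF ha).2 (k.2.1 x)
    · intro v hv
      refine Finset.mem_image.2 ⟨v, hv, ?_⟩
      have := k.2.2 v
      rw [(mem_AF ha).1 hv] at this
      exact this
  rw [h1, h2, image_AF_barp ha, sec_image_a ha, card_AF]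

theorem uG_memP (ha : ∀ x, a (a x) = a x) (ι : Sc a ↪ Rt a) (jemb : Fx a ↪ Rt a)
    (α₀ : Fx a) (k : Rt a) : uG a ha ι jemb α₀ k ∈ Pset a :=
  elt_memP ha ι k k _

theorem uG_rnk (ha : ∀ x, a (a x) = a x) (ι : Sc a ↪ Rt a) (jemb : Fx a ↪ Rt a)
    (α₀ : Fx a) (k : Rt a) : rnk (uG a ha ι jemb α₀ k) = rnk a :=
  elt_rnk ha ι k k _

theorem vmul_elt_uG (ha : ∀ x, a (a x) = a x) (ι : Sc a ↪ Rt a) (jemb : Fx a ↪ Rt a)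
    (α₀ : Fx a) (k k' j : Rt a) (π : Equiv.Perm (Fx a)) :
    vmul a (elt a ha ι k k' π) (uG a ha ι jemb α₀ j) =
      elt a ha ι k j (Gp jemb α₀ j * π) := by
  funext x
  show (Dk ha ι j).1 (barp a ha (Gp jemb α₀ j)
      (j.1 (a ((Dk ha ι k').1 (barp a ha π (k.1 x)))))) =
    (Dk ha ι j).1 (barp a ha (Gp jemb α₀ j * π) (k.1 x))
  have hfz : a (barp a ha π (k.1 x)) = barp a ha π (k.1 x) := (π ⟨a (k.1 x), ha _⟩).2
  have h1 : a ((Dk ha ι k').1 (barp a ha π (k.1 x))) = barp a ha π (k.1 x) := by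
    rw [(Dk ha ι k').2.1, hfz]
  rw [h1]
  have h2 : j.1 (barp a ha π (k.1 x)) = barp a ha π (k.1 x) := by
    conv_lhs => rw [← hfz]
    rw [j.2.2, hfz]
  rw [h2]
  apply congrArg
  have hsub : (⟨a (barp a ha π (k.1 x)), ha _⟩ : Fx a) = π ⟨a (k.1 x), ha _⟩ :=
    Subtype.ext (by exact hfz)
  show ((Gp jemb α₀ j) ⟨a (barp a ha π (k.1 x)), ha _⟩).1 =
    (((Gp jemb α₀ j) * π) ⟨a (k.1 x), ha _⟩).1
  change _ = ((Gp jemb α₀ j) (π ⟨a (k.1 x), ha _⟩)).1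
  exact congrArg Subtype.val (congrArg (Gp jemb α₀ j) hsub)


-- ## swap decomposition and permutation generation
theorem swap_decomp {α : Type*} [DecidableEq α] (α₀ x y : α) (hx : x ≠ α₀) (hy : y ≠ α₀)
    (hxy : x ≠ y) :
    Equiv.swap x y = Equiv.swap α₀ x * Equiv.swap α₀ y * Equiv.swap α₀ x := by
  ext z
  simp only [Equiv.Perm.mul_apply, Equiv.swap_apply_def]
  split_ifs <;> simp_all

theorem perm_mem_T {α : Type*} [DecidableEq α] [Fintype α] (T : Set (Equiv.Perm α))
    (hcl : ∀ p ∈ T, ∀ q ∈ T, p * q ∈ T) (α₀ : α) (hone : (1 : Equiv.Perm α) ∈ T)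
    (hsw : ∀ β, Equiv.swap α₀ β ∈ T) : ∀ π, π ∈ T := by
  intro π
  refine Equiv.Perm.swap_induction_on π hone ?_
  intro f x y hxy hf
  by_cases hx : x = α₀
  · subst hx
    exact hcl _ (hsw y) _ hf
  · by_cases hy : y = α₀
    · subst hy
      rw [Equiv.swap_comm]
      exact hcl _ (hsw x) _ hf
    · rw [swap_decomp α₀ x y hx hy hxy, mul_assoc, mul_assoc]
      exact hcl _ (hsw x) _ (hcl _ (hsw y) _ (hcl _ (hsw x) _ hf))

section Gen

variable {a : X → X} (ha : ∀ x, a (a x) = a x) (ι : Sc a ↪ Rt a)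
  (jemb : Fx a ↪ Rt a) (α₀ : Fx a) (a₁ a₂ : X)

noncomputable def Uset : Set (X → X) :=
  Set.range (uG a ha ι jemb α₀) ∪ {wmap a a₁ a₂}

def Qp (π : Equiv.Perm (Fx a)) : Prop :=
  ∀ k j : Rt a, elt a ha ι k j (Gp jemb α₀ j * π * Gp jemb α₀ k) ∈
    genBy (vmul a) (Uset ha ι jemb α₀ a₁ a₂)

theorem uG_mem_U (k : Rt a) : uG a ha ι jemb α₀ k ∈ Uset ha ι jemb α₀ a₁ a₂ :=
  Or.inl ⟨k, rfl⟩

theorem wmap_mem_U : wmap a a₁ a₂ ∈ Uset ha ι jemb α₀ a₁ a₂ :=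
  Or.inr rfl

theorem Qp_one : Qp ha ι jemb α₀ a₁ a₂ 1 := by
  intro k j
  have h1 : vmul a (uG a ha ι jemb α₀ k) (uG a ha ι jemb α₀ j) ∈
      genBy (vmul a) (Uset ha ι jemb α₀ a₁ a₂) :=
    genBy_closed (subset_genBy _ _ (uG_mem_U ha ι jemb α₀ a₁ a₂ k))
      (subset_genBy _ _ (uG_mem_U ha ι jemb α₀ a₁ a₂ j))
  have h2 : vmul a (uG a ha ι jemb α₀ k) (uG a ha ι jemb α₀ j) =
      elt a ha ι k j (Gp jemb α₀ j * Gp jemb α₀ k) := vmul_elt_uG ha ι jemb α₀ k k j _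
  rw [h2] at h1
  rw [mul_one]
  exact h1

theorem Qp_step (j' : Rt a) (π : Equiv.Perm (Fx a)) (hπ : Qp ha ι jemb α₀ a₁ a₂ π) :
    Qp ha ι jemb α₀ a₁ a₂ (Gp jemb α₀ j' * π) := by
  intro k j
  have h1 := hπ k j'
  have h2 := genBy_closed h1 (subset_genBy _ _ (uG_mem_U ha ι jemb α₀ a₁ a₂ j))
  rw [vmul_elt_uG ha ι jemb α₀ k j' j] at h2
  have h3 : Gp jemb α₀ j * (Gp jemb α₀ j' * π * Gp jemb α₀ k) =
      Gp jemb α₀ j * (Gp jemb α₀ j' * π) * Gp jemb α₀ k := by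
    group
  rw [h3] at h2
  exact h2

theorem Qp_all (π : Equiv.Perm (Fx a)) : Qp ha ι jemb α₀ a₁ a₂ π := by
  set T := genBy (fun p q : Equiv.Perm (Fx a) => p * q) (Set.range (Gp jemb α₀)) with hT
  have hcl : ∀ p ∈ T, ∀ q ∈ T, p * q ∈ T := fun p hp q hq => genBy_closed hp hq
  have hone : (1 : Equiv.Perm (Fx a)) ∈ T := by
    apply subset_genBy
    refine ⟨jemb α₀, ?_⟩
    rw [Gp_j, Equiv.swap_self]
    rfl
  have hsw : ∀ β, Equiv.swap α₀ β ∈ T := fun β => subset_genBy _ _ ⟨jemb β, Gp_j β⟩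
  have hTall := perm_mem_T T hcl α₀ hone hsw
  have hN : T ⊆ {π'' : Equiv.Perm (Fx a) |
      ∀ ρ, Qp ha ι jemb α₀ a₁ a₂ ρ → Qp ha ι jemb α₀ a₁ a₂ (π'' * ρ)} := by
    apply genBy_le
    · rintro _ ⟨j', rfl⟩ ρ hρ
      exact Qp_step ha ι jemb α₀ a₁ a₂ j' ρ hρ
    · intro p hp q hq ρ hρ
      have := hp _ (hq _ hρ)
      rw [← mul_assoc] at this
      exact this
  have := hN (hTall π) 1 (Qp_one ha ι jemb α₀ a₁ a₂)
  rw [mul_one] at this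
  exact this

theorem elt_mem_S (π : Equiv.Perm (Fx a)) (k j : Rt a) :
    elt a ha ι k j π ∈ genBy (vmul a) (Uset ha ι jemb α₀ a₁ a₂) := by
  have h1 := Qp_all ha ι jemb α₀ a₁ a₂ ((Gp jemb α₀ j)⁻¹ * π * (Gp jemb α₀ k)⁻¹) k j
  have h2 : Gp jemb α₀ j * ((Gp jemb α₀ j)⁻¹ * π * (Gp jemb α₀ k)⁻¹) * Gp jemb α₀ k = π := by
    group
  rw [h2] at h1
  exact h1

end Gen


-- ## every element of maximal rank lies in the generated subsemigroup
section LemA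

variable {a : X → X}

theorem rankr_mem_S (ha : ∀ x, a (a x) = a x) (ι : Sc a ↪ Rt a)
    (jemb : Fx a ↪ Rt a) (α₀ : Fx a) (a₁ a₂ : X) {f : X → X}
    (hf : f ∈ Pset a) (hrf : rnk f = rnk a) :
    f ∈ genBy (vmul a) (Uset ha ι jemb α₀ a₁ a₂) := by
  classical
  have hcA : ((AF a).image f).card = (AF a).card := by
    rw [P_cardA hf, hrf, card_AF]
  have hinjA : Set.InjOn f (AF a) := Finset.injOn_of_card_image_eq hcA
  have hsurjA : ((AF a).image f).image a = AF a := by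
    apply Finset.eq_of_subset_of_card_le
    · intro v hv
      obtain ⟨w, -, rfl⟩ := Finset.mem_image.1 hv
      exact Finset.mem_image.2 ⟨w, Finset.mem_univ _, rfl⟩
    · rw [mem_Pset_iff.1 hf, hrf, card_AF]
  -- the retraction
  have hexτ : ∀ x, ∃ γ, γ ∈ AF a ∧ f γ = f x := by
    intro x
    have : f x ∈ (AF a).image f := by
      rw [P_imageA hf]
      exact Finset.mem_image.2 ⟨x, Finset.mem_univ _, rfl⟩
    obtain ⟨γ, hγ, h⟩ := Finset.mem_image.1 this
    exact ⟨γ, hγ, h⟩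
  set τ0 : X → X := fun x => (hexτ x).choose with hτ0
  have τ0mem : ∀ x, τ0 x ∈ AF a := fun x => (hexτ x).choose_spec.1
  have τ0f : ∀ x, f (τ0 x) = f x := fun x => (hexτ x).choose_spec.2
  have hτp1 : ∀ x, a (τ0 x) = τ0 x := fun x => (mem_AF ha).1 (τ0mem x)
  have hτp2 : ∀ x, τ0 (a x) = a x := by
    intro x
    have hax : a x ∈ AF a := Finset.mem_image.2 ⟨x, Finset.mem_univ _, rfl⟩
    exact hinjA (by exact_mod_cast τ0mem (a x)) (by exact_mod_cast hax) (τ0f (a x))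
  set τf : Rt a := ⟨τ0, hτp1, hτp2⟩ with hτf
  -- the section
  have hexd : ∀ x, ∃ v, v ∈ Finset.univ.image f ∧ a v = a x := by
    intro x
    have hax : a x ∈ ((AF a).image f).image a := by
      rw [hsurjA]
      exact Finset.mem_image.2 ⟨x, Finset.mem_univ _, rfl⟩
    obtain ⟨v, hv, hva⟩ := Finset.mem_image.1 hax
    rw [P_imageA hf] at hv
    exact ⟨v, hv, hva⟩
  set d0 : X → X := fun x => (hexd x).choose with hd0
  have d0mem : ∀ x, d0 x ∈ Finset.univ.image f := fun x => (hexd x).choose_spec.1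
  have d0a : ∀ x, a (d0 x) = a x := fun x => (hexd x).choose_spec.2
  have hdp2 : ∀ x, d0 (a x) = d0 x := by
    intro x
    apply P_injOn hf _ (d0mem (a x)) _ (d0mem x)
    rw [d0a, d0a, ha]
  set dB : Sc a := ⟨d0, d0a, hdp2⟩ with hdB
  -- the permutation
  have pinj : Function.Injective (fun y : Fx a => (⟨a (f y.1), ha (f y.1)⟩ : Fx a)) := by
    intro y y' h
    have h1 : a (f y.1) = a (f y'.1) := congrArg Subtype.val h
    have h2 : f y.1 = f y'.1 :=
      P_injOn hf _ (Finset.mem_image.2 ⟨y.1, Finset.mem_univ _, rfl⟩)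
        _ (Finset.mem_image.2 ⟨y'.1, Finset.mem_univ _, rfl⟩) h1
    have h3 : y.1 = y'.1 :=
      hinjA (by exact_mod_cast (mem_AF ha).2 y.2) (by exact_mod_cast (mem_AF ha).2 y'.2) h2
    exact Subtype.ext h3
  set πf : Equiv.Perm (Fx a) :=
    Equiv.ofBijective _ (Finite.injective_iff_bijective.1 pinj) with hπf
  have πf_apply : ∀ y : Fx a, πf y = ⟨a (f y.1), ha (f y.1)⟩ := fun y => rfl
  -- the decomposition
  have key : f = elt a ha ι τf (ι dB) πf := by
    funext x
    show f x = (Dk ha ι (ι dB)).1 (barp a ha πf (τ0 x))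
    rw [Dk_ι]
    show f x = d0 ((πf ⟨a (τ0 x), ha (τ0 x)⟩).1)
    have hsub : (⟨a (τ0 x), ha (τ0 x)⟩ : Fx a) = ⟨τ0 x, hτp1 x⟩ := Subtype.ext (hτp1 x)
    rw [hsub]
    show f x = d0 (a (f (τ0 x)))
    rw [τ0f x]
    apply P_injOn hf _ (Finset.mem_image.2 ⟨x, Finset.mem_univ _, rfl⟩) _ (d0mem (a (f x)))
    rw [d0a, ha]
  rw [key]
  exact elt_mem_S ha ι jemb α₀ a₁ a₂ πf τf (ι dB)

end LemA


-- ## descent: factoring a low-rank element through rank+1 elements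
theorem image_eq_AF_image {a g : X → X} (hg : ∀ x, g (a x) = g x) :
    Finset.univ.image g = (AF a).image g := by
  apply Finset.Subset.antisymm
  · intro v hv
    obtain ⟨x, -, rfl⟩ := Finset.mem_image.1 hv
    exact Finset.mem_image.2 ⟨a x, Finset.mem_image.2 ⟨x, Finset.mem_univ _, rfl⟩, hg x⟩
  · exact Finset.image_subset_image (Finset.subset_univ _)

theorem collision {a f : X → X} (hf : f ∈ Pset a) (hlow : rnk f < rnk a) :
    ∃ α ∈ AF a, ∃ β ∈ AF a, α ≠ β ∧ f α = f β := by
  have hmaps : ∀ x ∈ AF a, f x ∈ (AF a).image f :=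
    fun x hx => Finset.mem_image.2 ⟨x, hx, rfl⟩
  have hcard : ((AF a).image f).card < (AF a).card := by
    rw [P_cardA hf, card_AF]; exact hlow
  exact Finset.exists_ne_map_eq_of_card_lt_of_maps_to hcard hmaps

theorem fresh_point {a f : X → X} (ha : ∀ x, a (a x) = a x) (hf : f ∈ Pset a)
    (hlow : rnk f < rnk a) :
    ∃ p ∈ AF a, p ∉ (Finset.univ.image f).image a ∧ p ∉ Finset.univ.image f ∧ a p = p := by
  have hcard : ((Finset.univ.image f).image a).card < (AF a).card := by
    rw [P_card_image_a hf, card_AF]; exact hlow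
  have hns : ¬ (AF a ⊆ (Finset.univ.image f).image a) := by
    intro hsub
    exact absurd (Finset.card_le_card hsub) (by omega)
  obtain ⟨p, hp, hpn⟩ := Finset.not_subset.1 hns
  have hfix : a p = p := (mem_AF ha).1 hp
  refine ⟨p, hp, hpn, ?_, hfix⟩
  intro hpim
  exact hpn (Finset.mem_image.2 ⟨p, hpim, hfix⟩)

theorem descent {a f : X → X} (ha : ∀ x, a (a x) = a x) (hf : f ∈ Pset a)
    (hlow : rnk f + 2 ≤ rnk a) :
    ∃ f₁ f₂, f₁ ∈ Pset a ∧ f₂ ∈ Pset a ∧ rnk f₁ = rnk f + 1 ∧ rnk f₂ = rnk f + 1 ∧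
      f = vmul a f₁ f₂ := by
  classical
  set imf := Finset.univ.image f with himf
  obtain ⟨α, hαA, β, hβA, hαβ, fαβ⟩ := collision hf (by omega)
  obtain ⟨p, hpA, hpnia, hpnim, hpfix⟩ := fresh_point ha hf (by omega)
  set f₁ : X → X := fun x => if x = β then p else f x with hf₁
  have hf₁im : Finset.univ.image f₁ = insert p imf := by
    apply Finset.Subset.antisymm
    · intro v hv
      obtain ⟨x, -, rfl⟩ := Finset.mem_image.1 hv
      by_cases hx : x = β
      · rw [hf₁]; simp only [if_pos hx]; exact Finset.mem_insert_self _ _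
      · rw [hf₁]; simp only [if_neg hx]
        exact Finset.mem_insert_of_mem (Finset.mem_image.2 ⟨x, Finset.mem_univ _, rfl⟩)
    · intro v hv
      rcases Finset.mem_insert.1 hv with rfl | hv
      · exact Finset.mem_image.2 ⟨β, Finset.mem_univ _, by rw [hf₁]; simp⟩
      · obtain ⟨t, -, rfl⟩ := Finset.mem_image.1 hv
        by_cases ht : t = β
        · subst ht
          refine Finset.mem_image.2 ⟨α, Finset.mem_univ _, ?_⟩
          rw [hf₁]; simp only [if_neg hαβ]; exact fαβ
        · exact Finset.mem_image.2 ⟨t, Finset.mem_univ _, by rw [hf₁]; simp [ht]⟩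
  have hf₁A : (AF a).image f₁ = insert p ((AF a).image f) := by
    apply Finset.Subset.antisymm
    · intro v hv
      obtain ⟨x, hx, rfl⟩ := Finset.mem_image.1 hv
      by_cases hxb : x = β
      · rw [hf₁]; simp only [if_pos hxb]; exact Finset.mem_insert_self _ _
      · rw [hf₁]; simp only [if_neg hxb]
        exact Finset.mem_insert_of_mem (Finset.mem_image.2 ⟨x, hx, rfl⟩)
    · intro v hv
      rcases Finset.mem_insert.1 hv with rfl | hv
      · exact Finset.mem_image.2 ⟨β, hβA, by rw [hf₁]; simp⟩
      · obtain ⟨t, htA, rfl⟩ := Finset.mem_image.1 hv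
        by_cases ht : t = β
        · subst ht
          refine Finset.mem_image.2 ⟨α, hαA, ?_⟩
          rw [hf₁]; simp only [if_neg hαβ]; exact fαβ
        · exact Finset.mem_image.2 ⟨t, htA, by rw [hf₁]; simp [ht]⟩
  have hrnkf₁ : rnk f₁ = rnk f + 1 := by
    rw [rnk_eq, hf₁im, Finset.card_insert_of_notMem hpnim]
    rfl
  have hf₁P : f₁ ∈ Pset a := by
    rw [mem_Pset_iff, hf₁A, P_imageA hf, Finset.image_insert,
      Finset.card_insert_of_notMem (by rw [hpfix]; exact hpnia), hrnkf₁,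
      ← himf, P_card_image_a hf]
  -- the second factor
  set f₂ : X → X := fun x => if h : ∃ v, v ∈ imf ∧ a v = a x then h.choose
    else if a x = p then f α else p with hf₂
  have c1 : ∀ x v, v ∈ imf → a v = a x → f₂ x = v := by
    intro x v hv hva
    have hex : ∃ u, u ∈ imf ∧ a u = a x := ⟨v, hv, hva⟩
    show (if h : ∃ u, u ∈ imf ∧ a u = a x then h.choose else if a x = p then f α else p) = v
    rw [dif_pos hex]
    have hs := hex.choose_spec
    exact P_injOn hf _ hs.1 _ hv (hs.2.trans hva.symm)
  have c2 : ∀ x, (¬ ∃ v, v ∈ imf ∧ a v = a x) → a x = p → f₂ x = f α := by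
    intro x h hx
    show (if h : ∃ u, u ∈ imf ∧ a u = a x then h.choose else if a x = p then f α else p) = f α
    rw [dif_neg h, if_pos hx]
  have c3 : ∀ x, (¬ ∃ v, v ∈ imf ∧ a v = a x) → a x ≠ p → f₂ x = p := by
    intro x h hx
    show (if h : ∃ u, u ∈ imf ∧ a u = a x then h.choose else if a x = p then f α else p) = p
    rw [dif_neg h, if_neg hx]
  have hnp : ¬ ∃ v, v ∈ imf ∧ a v = p := by
    rintro ⟨v, hv, hva⟩
    exact hpnia (Finset.mem_image.2 ⟨v, hv, hva⟩)
  have hdec : f = vmul a f₁ f₂ := by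
    funext x
    show f x = f₂ (a (f₁ x))
    by_cases hx : x = β
    · have hfb : f₁ x = p := by rw [hf₁]; exact if_pos hx
      rw [hfb, c2 (a p) (by
          intro ⟨v, hv, hva⟩
          rw [ha, hpfix] at hva
          exact hnp ⟨v, hv, hva⟩) (by rw [ha, hpfix]), hx]
      exact fαβ.symm
    · have hfb : f₁ x = f x := by rw [hf₁]; exact if_neg hx
      rw [hfb]
      exact (c1 (a (f x)) (f x) (Finset.mem_image.2 ⟨x, Finset.mem_univ _, rfl⟩)
        (by rw [ha])).symm
  have hf₂a : ∀ x, f₂ (a x) = f₂ x := by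
    intro x
    by_cases h : ∃ v, v ∈ imf ∧ a v = a x
    · obtain ⟨v, hv, hva⟩ := h
      rw [c1 x v hv hva, c1 (a x) v hv (by rw [ha]; exact hva)]
    · have h' : ¬ ∃ v, v ∈ imf ∧ a v = a (a x) := by
        rintro ⟨v, hv, hva⟩
        rw [ha] at hva
        exact h ⟨v, hv, hva⟩
      by_cases hx : a x = p
      · rw [c2 x h hx, c2 (a x) h' (by rw [ha]; exact hx)]
      · rw [c3 x h hx, c3 (a x) h' (by rw [ha]; exact hx)]
  have hf₂A : (AF a).image f₂ = insert p imf := by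
    apply Finset.Subset.antisymm
    · intro v hv
      obtain ⟨z, hzA, rfl⟩ := Finset.mem_image.1 hv
      by_cases h : ∃ u, u ∈ imf ∧ a u = a z
      · obtain ⟨u, hu, hua⟩ := h
        rw [c1 z u hu hua]
        exact Finset.mem_insert_of_mem hu
      · by_cases hz : a z = p
        · rw [c2 z h hz]
          exact Finset.mem_insert_of_mem (Finset.mem_image.2 ⟨α, Finset.mem_univ _, rfl⟩)
        · rw [c3 z h hz]
          exact Finset.mem_insert_self _ _
    · intro v hv
      rcases Finset.mem_insert.1 hv with rfl | hv
      · -- find a point of AF outside insert p (imf.image a)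
        have hcard2 : (insert v (imf.image a)).card < (AF a).card := by
          have h1 : (insert v (imf.image a)).card ≤ (imf.image a).card + 1 :=
            Finset.card_insert_le _ _
          have h2 : (imf.image a).card = rnk f := P_card_image_a hf
          rw [card_AF]
          omega
        have hns : ¬ (AF a ⊆ insert v (imf.image a)) := by
          intro hsub
          exact absurd (Finset.card_le_card hsub) (by omega)
        obtain ⟨z₀, hz₀A, hz₀n⟩ := Finset.not_subset.1 hns
        have hz₀fix : a z₀ = z₀ := (mem_AF ha).1 hz₀A
        have hz₀p : a z₀ ≠ v := by
          rw [hz₀fix]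
          intro hc
          exact hz₀n (hc ▸ Finset.mem_insert_self _ _)
        have hz₀ne : ¬ ∃ u, u ∈ imf ∧ a u = a z₀ := by
          rintro ⟨u, hu, hua⟩
          rw [hz₀fix] at hua
          exact hz₀n (Finset.mem_insert_of_mem (Finset.mem_image.2 ⟨u, hu, hua⟩))
        exact Finset.mem_image.2 ⟨z₀, hz₀A, c3 z₀ hz₀ne hz₀p⟩
      · obtain ⟨t, -, rfl⟩ := Finset.mem_image.1 hv
        refine Finset.mem_image.2 ⟨a (f t), (mem_AF ha).2 (ha (f t)), ?_⟩
        exact c1 (a (f t)) (f t) (Finset.mem_image.2 ⟨t, Finset.mem_univ _, rfl⟩)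
          (by rw [ha])
  have hf₂im : Finset.univ.image f₂ = insert p imf := by
    rw [image_eq_AF_image hf₂a, hf₂A]
  have hrnkf₂ : rnk f₂ = rnk f + 1 := by
    rw [rnk_eq, hf₂im, Finset.card_insert_of_notMem hpnim]
    rfl
  have hf₂P : f₂ ∈ Pset a := by
    rw [mem_Pset_iff, hf₂A, Finset.image_insert,
      Finset.card_insert_of_notMem (by rw [hpfix]; exact hpnia), hrnkf₂]
    have hfin : (Finset.image a imf).card = rnk f := P_card_image_a hf
    rw [hfin]
  exact ⟨f₁, f₂, hf₁P, hf₂P, hrnkf₁, hrnkf₂, hdec⟩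


-- ## rank (r-1) elements
theorem exists_rep {a f : X → X} (hf : f ∈ Pset a) (x : X) :
    ∃ γ, γ ∈ AF a ∧ f γ = f x := by
  have : f x ∈ (AF a).image f := by
    rw [P_imageA hf]
    exact Finset.mem_image.2 ⟨x, Finset.mem_univ _, rfl⟩
  obtain ⟨γ, hγ, h⟩ := Finset.mem_image.1 this
  exact ⟨γ, hγ, h⟩

theorem rank_pred_mem {a : X → X} (ha : ∀ x, a (a x) = a x) (ι : Sc a ↪ Rt a)
    (jemb : Fx a ↪ Rt a) (α₀ : Fx a) {a₁ a₂ : X} (h₁ : a a₁ = a₁) (h₂ : a a₂ = a₂)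
    (h₁₂ : a₁ ≠ a₂) {f : X → X} (hf : f ∈ Pset a) (hrf : rnk f + 1 = rnk a) :
    f ∈ genBy (vmul a) (Uset ha ι jemb α₀ a₁ a₂) := by
  classical
  obtain ⟨α, hαA, β, hβA, hαβ, fαβ⟩ := collision hf (by omega)
  obtain ⟨p, hpA, hpnia, hpnim, hpfix⟩ := fresh_point ha hf (by omega)
  -- injectivity off β
  have him2 : ((AF a).erase β).image f = (AF a).image f := by
    apply Finset.Subset.antisymm (Finset.image_subset_image (Finset.erase_subset _ _))
    intro v hv
    obtain ⟨t, htA, rfl⟩ := Finset.mem_image.1 hv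
    by_cases ht : t = β
    · subst ht
      exact Finset.mem_image.2 ⟨α, Finset.mem_erase.2 ⟨hαβ, hαA⟩, fαβ⟩
    · exact Finset.mem_image.2 ⟨t, Finset.mem_erase.2 ⟨ht, htA⟩, rfl⟩
  have hinj2 : Set.InjOn f ((AF a).erase β) := by
    apply Finset.injOn_of_card_image_eq
    rw [him2, P_cardA hf, Finset.card_erase_of_mem hβA, card_AF]
    omega
  -- subtype points
  set α' : Fx a := ⟨α, (mem_AF ha).1 hαA⟩ with hα'
  set β' : Fx a := ⟨β, (mem_AF ha).1 hβA⟩ with hβ'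
  set A1 : Fx a := ⟨a₁, h₁⟩ with hA1
  set A2 : Fx a := ⟨a₂, h₂⟩ with hA2
  have hαβ' : β' ≠ α' := fun hc => hαβ (congrArg Subtype.val hc).symm
  have hA12 : A1 ≠ A2 := fun hc => h₁₂ (congrArg Subtype.val hc)
  set σ : Equiv.Perm (Fx a) := Equiv.swap α' A1 with hσ
  set β₁ : Fx a := σ β' with hβ₁
  have hβ₁A1 : β₁ ≠ A1 := by
    intro hc
    have : β' = α' := by
      have h3 := congrArg σ.symm hc
      rw [Equiv.symm_apply_apply] at h3
      rw [h3, hσ, Equiv.symm_swap, Equiv.swap_apply_right]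
    exact hαβ' this
  set π : Equiv.Perm (Fx a) := Equiv.swap β₁ A2 * σ with hπ
  have hπα : π α' = A1 := by
    rw [hπ, Equiv.Perm.mul_apply, hσ, Equiv.swap_apply_left]
    exact Equiv.swap_apply_of_ne_of_ne (Ne.symm hβ₁A1) hA12
  have hπβ : π β' = A2 := by
    rw [hπ, Equiv.Perm.mul_apply, ← hβ₁, Equiv.swap_apply_left]
  -- the retraction
  set ρ : X → X := fun x => (exists_rep hf x).choose with hρ
  have ρmem : ∀ x, ρ x ∈ AF a := fun x => (exists_rep hf x).choose_spec.1
  have ρfix : ∀ x, a (ρ x) = ρ x := fun x => (mem_AF ha).1 (ρmem x)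
  have ρf : ∀ x, f (ρ x) = f x := fun x => (exists_rep hf x).choose_spec.2
  set τg0 : X → X := fun x => if a x = x then x else ρ x with hτg0
  have hτgfix : ∀ x, a (τg0 x) = τg0 x := by
    intro x
    rw [hτg0]
    by_cases h : a x = x
    · simp only [if_pos h]; exact h
    · simp only [if_neg h]; exact ρfix x
  have hτga : ∀ x, τg0 (a x) = a x := by
    intro x
    rw [hτg0]
    simp only [if_pos (ha x)]
  set τg : Rt a := ⟨τg0, hτgfix, hτga⟩ with hτg
  have hfτ : ∀ x, f (τg0 x) = f x := by
    intro x
    rw [hτg0]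
    by_cases h : a x = x
    · simp only [if_pos h]
    · simp only [if_neg h]; exact ρf x
  -- the left factor g
  set g : X → X := fun x => barp a ha π (τg0 x) with hg
  have hgim : Finset.univ.image g = AF a := by
    have h1 : Finset.univ.image g = (Finset.univ.image τg0).image (barp a ha π) := by
      rw [Finset.image_image]; rfl
    rw [h1, image_univ_ret ha τg, image_AF_barp ha]
  have hgA : (AF a).image g = AF a := by
    have h1 : (AF a).image g = ((AF a).image τg0).image (barp a ha π) := by
      rw [Finset.image_image]; rfl
    have h2 : (AF a).image τg0 = AF a := by
      apply Finset.Subset.antisymm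
      · intro v hv
        obtain ⟨x, -, rfl⟩ := Finset.mem_image.1 hv
        exact (mem_AF ha).2 (hτgfix x)
      · intro v hv
        refine Finset.mem_image.2 ⟨v, hv, ?_⟩
        have h3 := hτga v
        rw [(mem_AF ha).1 hv] at h3
        exact h3
    rw [h1, h2, image_AF_barp ha]
  have hgrnk : rnk g = rnk a := by rw [rnk_eq, hgim, card_AF]
  have hgP : g ∈ Pset a := by
    rw [mem_Pset_iff, hgA, hgrnk]
    have h2 : (AF a).image a = AF a := by
      have h3 : (AF a).image a = (AF a).image id :=
        Finset.image_congr (fun y hy => (mem_AF ha).1 hy)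
      rw [h3, Finset.image_id]
    rw [h2, card_AF]
  -- the right factor h
  set hh : X → X := fun x => if a x = a₁ then p else f ((π.symm ⟨a x, ha x⟩).1) with hhh
  have hha : ∀ x, hh (a x) = hh x := by
    intro x
    rw [hhh]
    by_cases h : a x = a₁
    · simp only [ha, if_pos h]
    · simp only [ha, if_neg h]
  have hhA : (AF a).image hh = insert p (Finset.univ.image f) := by
    apply Finset.Subset.antisymm
    · intro v hv
      obtain ⟨z, hzA, rfl⟩ := Finset.mem_image.1 hv
      rw [hhh]
      by_cases h : a z = a₁
      · simp only [if_pos h]; exact Finset.mem_insert_self _ _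
      · simp only [if_neg h]
        exact Finset.mem_insert_of_mem (Finset.mem_image.2 ⟨_, Finset.mem_univ _, rfl⟩)
    · intro v hv
      rcases Finset.mem_insert.1 hv with rfl | hv
      · refine Finset.mem_image.2 ⟨a₁, (mem_AF ha).2 h₁, ?_⟩
        rw [hhh]
        simp only [if_pos h₁]
      · obtain ⟨t, -, rfl⟩ := Finset.mem_image.1 hv
        set γ₀ : X := if ρ t = α then β else ρ t with hγ₀
        have hγ₀A : γ₀ ∈ AF a := by
          rw [hγ₀]
          by_cases h : ρ t = α
          · simp only [if_pos h]; exact hβA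
          · simp only [if_neg h]; exact ρmem t
        have hγ₀f : f γ₀ = f t := by
          rw [hγ₀]
          by_cases h : ρ t = α
          · simp only [if_pos h]
            rw [← fαβ, ← h]
            exact ρf t
          · simp only [if_neg h]; exact ρf t
        have hγ₀α : γ₀ ≠ α := by
          rw [hγ₀]
          by_cases h : ρ t = α
          · simp only [if_pos h]; exact fun hc => hαβ hc.symm
          · simp only [if_neg h]; exact h
        set γ' : Fx a := ⟨γ₀, (mem_AF ha).1 hγ₀A⟩ with hγ'
        set z : X := (π γ').1 with hz
        have hzfix : a z = z := (π γ').2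
        have hzA : z ∈ AF a := (mem_AF ha).2 hzfix
        have hzne : z ≠ a₁ := by
          intro hc
          have : π γ' = A1 := Subtype.ext hc
          rw [← hπα] at this
          have := π.injective this
          exact hγ₀α (congrArg Subtype.val this)
        refine Finset.mem_image.2 ⟨z, hzA, ?_⟩
        rw [hhh]
        simp only [if_neg (by rw [hzfix]; exact hzne : ¬ a z = a₁)]
        have hsub : (⟨a z, ha z⟩ : Fx a) = π γ' := Subtype.ext (hzfix.trans hz)
        have h5 : π.symm ⟨a z, ha z⟩ = γ' := by
          rw [hsub]
          exact Equiv.symm_apply_apply _ _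
        rw [h5]
        exact hγ₀f
  have hhim : Finset.univ.image hh = insert p (Finset.univ.image f) := by
    rw [image_eq_AF_image hha, hhA]
  have hhrnk : rnk hh = rnk a := by
    rw [rnk_eq, hhim, Finset.card_insert_of_notMem hpnim, ← rnk_eq]
    omega
  have hhP : hh ∈ Pset a := by
    rw [mem_Pset_iff, hhA, Finset.image_insert,
      Finset.card_insert_of_notMem (by rw [hpfix]; exact hpnia), P_card_image_a hf, hhrnk]
    omega
  -- the decomposition
  have hdec : f = vmul a (vmul a g (wmap a a₁ a₂)) hh := by
    funext x
    show f x = hh (a (wmap a a₁ a₂ (a (g x))))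
    have claim : ∀ t₀ (h0 : a t₀ = t₀),
        hh (a (wmap a a₁ a₂ (a ((π ⟨t₀, h0⟩).1)))) = f t₀ := by
      intro t₀ h0
      set y : Fx a := π ⟨t₀, h0⟩ with hy
      have hyfix : a y.1 = y.1 := y.2
      by_cases hyA : y = A1
      · have hz1 : y.1 = a₁ := congrArg Subtype.val hyA
        rw [hz1]
        have hw : wmap a a₁ a₂ (a a₁) = a₂ := by
          unfold wmap
          rw [ha]
          simp only [if_pos h₁]
        rw [hw, hha]
        have hh2 : hh a₂ = f β := by
          rw [hhh]
          simp only [if_neg (by rw [h₂]; exact h₁₂.symm : ¬ a a₂ = a₁)]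
          have hsub : (⟨a a₂, ha a₂⟩ : Fx a) = A2 := Subtype.ext h₂
          have h5 : π.symm ⟨a a₂, ha a₂⟩ = β' := by
            rw [hsub, ← hπβ]
            exact Equiv.symm_apply_apply _ _
          rw [h5]
        rw [hh2]
        have ht₀ : t₀ = α := by
          have : (⟨t₀, h0⟩ : Fx a) = α' := π.injective (by rw [← hy, hyA]; exact hπα.symm)
          exact congrArg Subtype.val this
        rw [ht₀, fαβ]
      · have hzne : y.1 ≠ a₁ := fun hc => hyA (Subtype.ext hc)
        have hw : wmap a a₁ a₂ (a y.1) = y.1 := by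
          unfold wmap
          rw [ha, hyfix]
          simp only [if_neg hzne]
        rw [hw, hha]
        rw [hhh]
        simp only [if_neg (by rw [hyfix]; exact hzne : ¬ a y.1 = a₁)]
        have hsub : (⟨a y.1, ha y.1⟩ : Fx a) = y := Subtype.ext hyfix
        have h5 : π.symm ⟨a y.1, ha y.1⟩ = ⟨t₀, h0⟩ := by
          rw [hsub, hy]
          exact Equiv.symm_apply_apply _ _
        rw [h5]
    have hgx : g x = (π ⟨τg0 x, hτgfix x⟩).1 := by
      rw [hg]
      show (π ⟨a (τg0 x), ha (τg0 x)⟩).1 = _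
      have hsub : (⟨a (τg0 x), ha (τg0 x)⟩ : Fx a) = ⟨τg0 x, hτgfix x⟩ :=
        Subtype.ext (hτgfix x)
      rw [hsub]
    rw [hgx, claim (τg0 x) (hτgfix x), hfτ x]
  rw [hdec]
  exact genBy_closed (genBy_closed
    (rankr_mem_S ha ι jemb α₀ a₁ a₂ hgP hgrnk)
    (subset_genBy _ _ (wmap_mem_U ha ι jemb α₀ a₁ a₂)))
    (rankr_mem_S ha ι jemb α₀ a₁ a₂ hhP hhrnk)


-- ## assembling generation of all of Pset
theorem AF_image_a {a : X → X} (ha : ∀ x, a (a x) = a x) : (AF a).image a = AF a := by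
  have h3 : (AF a).image a = (AF a).image id :=
    Finset.image_congr (fun y hy => (mem_AF ha).1 hy)
  rw [h3, Finset.image_id]

theorem gen_all {a : X → X} (ha : ∀ x, a (a x) = a x) (ι : Sc a ↪ Rt a)
    (jemb : Fx a ↪ Rt a) (α₀ : Fx a) {a₁ a₂ : X} (h₁ : a a₁ = a₁) (h₂ : a a₂ = a₂)
    (h₁₂ : a₁ ≠ a₂) :
    ∀ t, ∀ f ∈ Pset a, rnk a ≤ rnk f + t →
      f ∈ genBy (vmul a) (Uset ha ι jemb α₀ a₁ a₂) := by
  intro t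
  induction t with
  | zero =>
    intro f hf hle
    exact rankr_mem_S ha ι jemb α₀ a₁ a₂ hf (by have := P_rnk_le hf; omega)
  | succ t IH =>
    intro f hf hle
    by_cases hc1 : rnk f = rnk a
    · exact rankr_mem_S ha ι jemb α₀ a₁ a₂ hf hc1
    · by_cases hc2 : rnk f + 1 = rnk a
      · exact rank_pred_mem ha ι jemb α₀ h₁ h₂ h₁₂ hf hc2
      · have hlow : rnk f + 2 ≤ rnk a := by have := P_rnk_le hf; omega
        obtain ⟨f₁, f₂, hf₁P, hf₂P, hr₁, hr₂, hdec⟩ := descent ha hf hlow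
        rw [hdec]
        exact genBy_closed (IH f₁ hf₁P (by omega)) (IH f₂ hf₂P (by omega))

theorem wmap_Pset {a : X → X} (ha : ∀ x, a (a x) = a x) {a₁ a₂ : X} (h₁ : a a₁ = a₁)
    (h₂ : a a₂ = a₂) (h₁₂ : a₁ ≠ a₂) :
    wmap a a₁ a₂ ∈ Pset a ∧ rnk (wmap a a₁ a₂) = rnk a - 1 := by
  have h₁A : a₁ ∈ AF a := (mem_AF ha).2 h₁
  have h₂A : a₂ ∈ AF a := (mem_AF ha).2 h₂
  have hwa : ∀ x, wmap a a₁ a₂ (a x) = wmap a a₁ a₂ x := by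
    intro x
    unfold wmap
    rw [ha]
  have hA : (AF a).image (wmap a a₁ a₂) = (AF a).erase a₁ := by
    apply Finset.Subset.antisymm
    · intro v hv
      obtain ⟨z, hzA, rfl⟩ := Finset.mem_image.1 hv
      unfold wmap
      rw [(mem_AF ha).1 hzA]
      by_cases h : z = a₁
      · simp only [if_pos h]
        exact Finset.mem_erase.2 ⟨h₁₂.symm, h₂A⟩
      · simp only [if_neg h]
        exact Finset.mem_erase.2 ⟨h, hzA⟩
    · intro v hv
      obtain ⟨hv1, hv2⟩ := Finset.mem_erase.1 hv
      refine Finset.mem_image.2 ⟨v, hv2, ?_⟩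
      unfold wmap
      rw [(mem_AF ha).1 hv2]
      simp only [if_neg hv1]
  have him : Finset.univ.image (wmap a a₁ a₂) = (AF a).erase a₁ := by
    rw [image_eq_AF_image hwa, hA]
  have hrnk : rnk (wmap a a₁ a₂) = rnk a - 1 := by
    rw [rnk_eq, him, Finset.card_erase_of_mem h₁A, card_AF]
  constructor
  · rw [mem_Pset_iff, hA, hrnk]
    have h4 : ((AF a).erase a₁).image a = ((AF a).erase a₁).image id :=
      Finset.image_congr (fun y hy => (mem_AF ha).1 (Finset.mem_of_mem_erase hy))
    rw [h4, Finset.image_id, Finset.card_erase_of_mem h₁A, card_AF]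
  · exact hrnk

theorem ret_Pset {a : X → X} (ha : ∀ x, a (a x) = a x) (τ : Rt a) :
    τ.1 ∈ Pset a ∧ rnk τ.1 = rnk a := by
  have h2 : (AF a).image τ.1 = AF a := by
    apply Finset.Subset.antisymm
    · intro v hv
      obtain ⟨x, -, rfl⟩ := Finset.mem_image.1 hv
      exact (mem_AF ha).2 (τ.2.1 x)
    · intro v hv
      refine Finset.mem_image.2 ⟨v, hv, ?_⟩
      have := τ.2.2 v
      rw [(mem_AF ha).1 hv] at this
      exact this
  have hrnk : rnk τ.1 = rnk a := by
    rw [rnk_eq, image_univ_ret ha τ, card_AF]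
  exact ⟨by rw [mem_Pset_iff, h2, AF_image_a ha, card_AF, hrnk], hrnk⟩

theorem Dr_closed {a x y : X → X} (hx : x ∈ Pset a) (hy : y ∈ Pset a)
    (hrx : rnk x = rnk a) (hry : rnk y = rnk a) : rnk (vmul a x y) = rnk a := by
  have h1 : Finset.univ.image (vmul a x y) =
      ((Finset.univ.image x).image a).image y := by
    rw [Finset.image_image, Finset.image_image]; rfl
  have h2 : (Finset.univ.image x).image a = AF a := by
    apply Finset.eq_of_subset_of_card_le
    · intro v hv
      obtain ⟨w, -, rfl⟩ := Finset.mem_image.1 hv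
      exact Finset.mem_image.2 ⟨w, Finset.mem_univ _, rfl⟩
    · rw [P_card_image_a hx, hrx, card_AF]
  rw [rnk_eq, h1, h2, P_cardA hy, hry]

-- ## the lower bound
theorem top_ker_witness {a : X → X} (U : Set (X → X)) (hUP : U ⊆ Pset a)
    (hgen : genBy (vmul a) U = Pset a) :
    ∀ f ∈ genBy (vmul a) U, rnk f = rnk a →
      ∃ u ∈ U, rnk u = rnk a ∧ ∀ s t, u s = u t ↔ f s = f t := by
  have hsub : genBy (vmul a) U ⊆ {f : X → X | f ∈ genBy (vmul a) U ∧
      (rnk f = rnk a → ∃ u ∈ U, rnk u = rnk a ∧ ∀ s t, u s = u t ↔ f s = f t)} := by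
    apply genBy_le
    · intro u hu
      exact ⟨subset_genBy _ _ hu, fun hr => ⟨u, hu, hr, fun _ _ => Iff.rfl⟩⟩
    · rintro x ⟨hxg, hxk⟩ y ⟨hyg, hyk⟩
      refine ⟨genBy_closed hxg hyg, fun hr => ?_⟩
      have hxP : x ∈ Pset a := hgen ▸ hxg
      have hkxz : ∀ s t, x s = x t → vmul a x y s = vmul a x y t := by
        intro s t h
        unfold vmul
        rw [h]
      have hrx : rnk x = rnk a := by
        have h1 : rnk (vmul a x y) ≤ rnk x := rnk_le_of_ker hkxz
        have h2 := P_rnk_le hxP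
        omega
      obtain ⟨u, hu, hur, huk⟩ := hxk hrx
      have hker := ker_eq_of_rnk_eq hkxz (by omega)
      refine ⟨u, hu, hur, fun s t => ?_⟩
      constructor
      · intro h
        exact hkxz s t ((huk s t).1 h)
      · intro h
        exact (huk s t).2 (hker s t h)
  intro f hf hr
  exact (hsub hf).2 hr

theorem low_rank_witness {a : X → X} (ha : ∀ x, a (a x) = a x) (h2 : 2 ≤ rnk a)
    (U : Set (X → X)) (hUP : U ⊆ Pset a) (hgen : genBy (vmul a) U = Pset a) :
    ∃ u ∈ U, rnk u ≠ rnk a := by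
  by_contra hcon
  push_neg at hcon
  -- a constant map is regular but has rank 1
  have hAne : (AF a).Nonempty := Finset.card_pos.1 (by rw [card_AF]; omega)
  obtain ⟨q, hq⟩ := hAne
  have hXne : Nonempty X := ⟨q⟩
  set c : X → X := fun _ => q with hc
  have hcim : ∀ (s : Finset X), s.Nonempty → s.image c = {q} := by
    intro s hs
    apply Finset.Subset.antisymm
    · intro v hv
      obtain ⟨z, -, rfl⟩ := Finset.mem_image.1 hv
      exact Finset.mem_singleton.2 rfl
    · intro v hv
      rw [Finset.mem_singleton.1 hv]
      exact Finset.mem_image.2 ⟨hs.choose, hs.choose_spec, rfl⟩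
  have hrc : rnk c = 1 := by
    rw [rnk_eq, hcim Finset.univ Finset.univ_nonempty, Finset.card_singleton]
  have hcP : c ∈ Pset a := by
    rw [mem_Pset_iff, hcim (AF a) ⟨q, hq⟩, hrc]
    have : ({q} : Finset X).image a = {q} := by
      rw [Finset.image_singleton, (mem_AF ha).1 hq]
    rw [this, Finset.card_singleton]
  -- but everything generated from rank-r elements has rank r
  have hsub : genBy (vmul a) U ⊆ {f : X → X | f ∈ genBy (vmul a) U ∧ rnk f = rnk a} := by
    apply genBy_le
    · intro u hu
      exact ⟨subset_genBy _ _ hu, hcon u hu⟩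
    · rintro x ⟨hxg, hxr⟩ y ⟨hyg, hyr⟩
      exact ⟨genBy_closed hxg hyg,
        Dr_closed (hgen ▸ hxg) (hgen ▸ hyg) hxr hyr⟩
  have := (hsub (hgen.symm ▸ hcP)).2
  omega

theorem lower_bound {a : X → X} (ha : ∀ x, a (a x) = a x) (h2 : 2 ≤ rnk a)
    (U : Set (X → X)) (hUP : U ⊆ Pset a) (hUfin : U.Finite)
    (hgen : genBy (vmul a) U = Pset a) :
    Fintype.card (Rt a) + 1 ≤ U.ncard := by
  classical
  have hwit : ∀ τ : Rt a, ∃ u ∈ U, rnk u = rnk a ∧ ∀ s t, u s = u t ↔ τ.1 s = τ.1 t := by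
    intro τ
    obtain ⟨hτP, hτr⟩ := ret_Pset ha τ
    exact top_ker_witness U hUP hgen τ.1 (hgen.symm ▸ hτP) hτr
  set Φ : Rt a → (X → X) := fun τ => (hwit τ).choose with hΦ
  have hΦU : ∀ τ, Φ τ ∈ U := fun τ => (hwit τ).choose_spec.1
  have hΦr : ∀ τ, rnk (Φ τ) = rnk a := fun τ => (hwit τ).choose_spec.2.1
  have hΦk : ∀ τ, ∀ s t, Φ τ s = Φ τ t ↔ τ.1 s = τ.1 t :=
    fun τ => (hwit τ).choose_spec.2.2
  have hΦinj : Function.Injective Φ := by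
    intro τ τ' h
    apply Subtype.ext
    funext x
    have hk : ∀ s t, τ.1 s = τ.1 t ↔ τ'.1 s = τ'.1 t := by
      intro s t
      rw [← hΦk τ s t, h, hΦk τ' s t]
    have h1 : τ.1 (τ.1 x) = τ.1 x := by
      have h3 := τ.2.2 (τ.1 x)
      rw [τ.2.1 x] at h3
      exact h3
    have h2 : τ'.1 (τ.1 x) = τ.1 x := by
      have h3 := τ'.2.2 (τ.1 x)
      rw [τ.2.1 x] at h3
      exact h3
    have := (hk (τ.1 x) x).1 h1
    rw [h2] at this
    exact this
  obtain ⟨u₀, hu₀U, hu₀r⟩ := low_rank_witness ha h2 U hUP hgen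
  have hUsub : insert u₀ (Finset.univ.image Φ) ⊆ hUfin.toFinset := by
    intro v hv
    rcases Finset.mem_insert.1 hv with rfl | hv
    · exact hUfin.mem_toFinset.2 hu₀U
    · obtain ⟨τ, -, rfl⟩ := Finset.mem_image.1 hv
      exact hUfin.mem_toFinset.2 (hΦU τ)
  have hcard1 : (Finset.univ.image Φ).card = Fintype.card (Rt a) := by
    rw [Finset.card_image_of_injective _ hΦinj, Finset.card_univ]
  have hu₀nm : u₀ ∉ Finset.univ.image Φ := by
    intro hc
    obtain ⟨τ, -, hτ⟩ := Finset.mem_image.1 hc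
    exact hu₀r (hτ ▸ hΦr τ)
  have hcard2 : (insert u₀ (Finset.univ.image Φ)).card = Fintype.card (Rt a) + 1 := by
    rw [Finset.card_insert_of_notMem hu₀nm, hcard1]
  have := Finset.card_le_card hUsub
  rw [hcard2] at this
  rw [Set.ncard_eq_toFinset_card U hUfin]
  omega


-- ## cardinality of the generating set
theorem uG_inj {a : X → X} (ha : ∀ x, a (a x) = a x) (ι : Sc a ↪ Rt a)
    (jemb : Fx a ↪ Rt a) (α₀ : Fx a) :
    Function.Injective (uG a ha ι jemb α₀) := by
  intro k k' h
  have key : ∀ (j : Rt a) (x : X), a (uG a ha ι jemb α₀ j x) =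
      barp a ha (Gp jemb α₀ j) (j.1 x) := by
    intro j x
    show a ((Dk ha ι j).1 (barp a ha (Gp jemb α₀ j) (j.1 x))) = _
    rw [(Dk ha ι j).2.1]
    exact (Gp jemb α₀ j ⟨a (j.1 x), ha _⟩).2
  have hbar : ∀ x, barp a ha (Gp jemb α₀ k) (k.1 x) =
      barp a ha (Gp jemb α₀ k') (k'.1 x) := by
    intro x
    rw [← key k x, ← key k' x, h]
  have hGp : Gp jemb α₀ k = Gp jemb α₀ k' := by
    apply Equiv.ext
    intro y
    have h1 := hbar y.1
    have hk1 : k.1 y.1 = y.1 := by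
      have := k.2.2 y.1
      rw [y.2] at this
      exact this
    have hk2 : k'.1 y.1 = y.1 := by
      have := k'.2.2 y.1
      rw [y.2] at this
      exact this
    rw [hk1, hk2] at h1
    have hsub : (⟨a y.1, ha y.1⟩ : Fx a) = y := Subtype.ext y.2
    show Gp jemb α₀ k y = Gp jemb α₀ k' y
    rw [← hsub]
    exact Subtype.ext h1
  apply Subtype.ext
  funext x
  have h1 := hbar x
  rw [hGp] at h1
  have h2 : (⟨a (k.1 x), ha _⟩ : Fx a) = ⟨a (k'.1 x), ha _⟩ :=
    (Gp jemb α₀ k').injective (Subtype.ext h1)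
  have h3 : a (k.1 x) = a (k'.1 x) := congrArg Subtype.val h2
  rw [k.2.1 x, k'.2.1 x] at h3
  exact h3

theorem Uset_ncard {a : X → X} (ha : ∀ x, a (a x) = a x) (ι : Sc a ↪ Rt a)
    (jemb : Fx a ↪ Rt a) (α₀ : Fx a) {a₁ a₂ : X} (h₁ : a a₁ = a₁) (h₂ : a a₂ = a₂)
    (h₁₂ : a₁ ≠ a₂) (h2 : 2 ≤ rnk a) :
    (Uset ha ι jemb α₀ a₁ a₂).ncard = Fintype.card (Rt a) + 1 := by
  classical
  have hw : wmap a a₁ a₂ ∉ Set.range (uG a ha ι jemb α₀) := by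
    rintro ⟨k, hk⟩
    have hr1 := uG_rnk ha ι jemb α₀ k
    have hr2 := (wmap_Pset ha h₁ h₂ h₁₂).2
    rw [hk] at hr1
    omega
  show (Set.range (uG a ha ι jemb α₀) ∪ {wmap a a₁ a₂}).ncard = _
  rw [Set.ncard_union_eq (Set.disjoint_singleton_right.2 hw) (Set.finite_range _)
    (Set.finite_singleton _), Set.ncard_singleton]
  have hrange : Set.range (uG a ha ι jemb α₀) =
      ↑(Finset.univ.image (uG a ha ι jemb α₀)) := by
    rw [Finset.coe_image, Finset.coe_univ, Set.image_univ]
  rw [hrange, Set.ncard_coe_finset,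
    Finset.card_image_of_injective _ (uG_inj ha ι jemb α₀), Finset.card_univ]

theorem genBy_Uset_eq {a : X → X} (ha : ∀ x, a (a x) = a x) (ι : Sc a ↪ Rt a)
    (jemb : Fx a ↪ Rt a) (α₀ : Fx a) {a₁ a₂ : X} (h₁ : a a₁ = a₁) (h₂ : a a₂ = a₂)
    (h₁₂ : a₁ ≠ a₂) :
    genBy (vmul a) (Uset ha ι jemb α₀ a₁ a₂) = Pset a := by
  apply Set.Subset.antisymm
  · apply genBy_le
    · rintro u (⟨k, rfl⟩ | hu)
      · exact uG_memP ha ι jemb α₀ k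
      · rw [Set.mem_singleton_iff.1 hu]
        exact (wmap_Pset ha h₁ h₂ h₁₂).1
    · intro x hx y hy
      exact P_closed hx hy
  · intro f hf
    exact gen_all ha ι jemb α₀ h₁ h₂ h₁₂ (rnk a) f hf (by omega)

theorem Uset_sub_Pset {a : X → X} (ha : ∀ x, a (a x) = a x) (ι : Sc a ↪ Rt a)
    (jemb : Fx a ↪ Rt a) (α₀ : Fx a) {a₁ a₂ : X} (h₁ : a a₁ = a₁) (h₂ : a a₂ = a₂)
    (h₁₂ : a₁ ≠ a₂) :
    Uset ha ι jemb α₀ a₁ a₂ ⊆ Pset a := by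
  rintro u (⟨k, rfl⟩ | hu)
  · exact uG_memP ha ι jemb α₀ k
  · rw [Set.mem_singleton_iff.1 hu]
    exact (wmap_Pset ha h₁ h₂ h₁₂).1

end SRank

open SRank in
theorem stmt_16 {X : Type*} [Fintype X] [DecidableEq X]
    (n : ℕ) (hn : n = Fintype.card X)
    (a : X → X) (ha : tmul a a = a) (r : ℕ) (hr : rnk a = r)
    (h1r : 1 < r) (hrn : r < n)
    (P : Set (X → X))
    (hP : P = {f : X → X | rnk (tmul (tmul a f) a) = rnk f}) :
    -- rank(Reg(T_X^a)) = r^(n-r) + 1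
    sInf {k : ℕ | ∃ U : Set (X → X),
        U ⊆ P ∧ U.Finite ∧ U.ncard = k ∧ genBy (vmul a) U = P} =
      r ^ (n - r) + 1 := by
  classical
  subst hn
  subst hr
  have hPeq : P = Pset a := hP
  subst hPeq
  have haa : ∀ x, a (a x) = a x := fun x => congrFun ha x
  have h2 : 2 ≤ rnk a := h1r
  obtain ⟨a₁, h₁A, a₂, h₂A, h₁₂⟩ :=
    Finset.one_lt_card.1 (by rw [card_AF]; omega : 1 < (AF a).card)
  have h₁ : a a₁ = a₁ := (mem_AF haa).1 h₁A
  have h₂ : a a₂ = a₂ := (mem_AF haa).1 h₂A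
  have hjle : Fintype.card (Fx a) ≤ Fintype.card (Rt a) := by
    rw [card_Fx haa, card_Rt haa]
    exact Nat.le_self_pow (by omega) _
  obtain ⟨jemb⟩ := Function.Embedding.nonempty_of_card_le hjle
  obtain ⟨ι⟩ := Function.Embedding.nonempty_of_card_le (card_Sc_le haa h2)
  set α₀ : Fx a := ⟨a₁, h₁⟩ with hα₀
  have hmem : rnk a ^ (Fintype.card X - rnk a) + 1 ∈ {k : ℕ | ∃ U : Set (X → X),
      U ⊆ Pset a ∧ U.Finite ∧ U.ncard = k ∧ genBy (vmul a) U = Pset a} := by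
    refine ⟨Uset haa ι jemb α₀ a₁ a₂, Uset_sub_Pset haa ι jemb α₀ h₁ h₂ h₁₂,
      Set.Finite.union (Set.finite_range _) (Set.finite_singleton _), ?_,
      genBy_Uset_eq haa ι jemb α₀ h₁ h₂ h₁₂⟩
    rw [Uset_ncard haa ι jemb α₀ h₁ h₂ h₁₂ h2, card_Rt haa]
  apply le_antisymm
  · exact Nat.sInf_le hmem
  · apply le_csInf ⟨_, hmem⟩
    rintro k ⟨U, hUP, hUfin, rfl, hgen⟩
    have hlb := lower_bound haa h2 U hUP hUfin hgen
    rw [card_Rt haa] at hlb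
    omega
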